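/- Noiseless superset correctness: if y = Ax₀ with supp x₀ = T, m > 2|T|, and Ω = {k : sin∠(a_k^L, Ran Y) = 0} with |T|+1 ≤ L ≤ m−|T|−1, then Ω = T exactly (the superset equals the true support), and in particular |Ω| ≤ m so the final least-squares step is well posed. -/

import Mathlib

noncomputable def partialFourier (m n : ℕ) : Matrix (Fin m) (Fin n) ℂ :=
  Matrix.of fun j k => Complex.exp (2 * Real.pi * Complex.I * j * k / n)

def hankel (m L : ℕ) (y : Fin m → ℂ) : Matrix (Fin L) (Fin (m - L)) ℂ :=
  Matrix.of fun p q => y ⟨p.1 + q.1, by have := p.2; have := q.2; omega⟩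

noncomputable def sinAngle {L : ℕ} (v : EuclideanSpace ℂ (Fin L))
    (V : Submodule ℂ (EuclideanSpace ℂ (Fin L))) : ℝ :=
  ‖v - (V.orthogonalProjection v : EuclideanSpace ℂ (Fin L))‖ / ‖v‖

noncomputable def colSpan {L M : ℕ} (Y : Matrix (Fin L) (Fin M) ℂ) :
    Submodule ℂ (EuclideanSpace ℂ (Fin L)) :=
  Submodule.span ℂ (Set.range fun q : Fin M => (WithLp.toLp 2 (fun p => Y p q) : EuclideanSpace ℂ (Fin L)))

lemma omega_inj {n : ℕ} (hn : 0 < n) :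
    Function.Injective fun k : Fin n => Complex.exp (2 * Real.pi * Complex.I * k / n) := by
  intro k k' h
  rw [Complex.exp_eq_exp_iff_exists_int] at h
  obtain ⟨z, hz⟩ := h
  have hn' : (n : ℂ) ≠ 0 := Nat.cast_ne_zero.mpr hn.ne'
  have hpi : (2 * (Real.pi : ℂ) * Complex.I) ≠ 0 := by
    simp [Real.pi_ne_zero, Complex.I_ne_zero]
  have h2 : (k : ℂ) = k' + z * n := by
    field_simp at hz
    linear_combination hz
  have h3 : (k.1 : ℤ) = k'.1 + z * n := by exact_mod_cast h2
  have hk := k.2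
  have hk' := k'.2
  have hz0 : z = 0 := by
    rcases lt_trichotomy z 0 with h | h | h
    · nlinarith [Int.add_one_le_iff.mpr h]
    · exact h
    · nlinarith [Int.add_one_le_iff.mpr h]
  subst hz0
  simp at h3
  exact Fin.ext (by omega)

lemma vand_li {n : ℕ} (hn : 0 < n) (N : ℕ) (s : Finset (Fin n)) (hs : s.card ≤ N) :
    LinearIndependent ℂ fun k : s =>
      (WithLp.toLp 2 (fun q : Fin N => Complex.exp (2 * Real.pi * Complex.I * (k : Fin n) / n) ^ (q : ℕ)) :
        EuclideanSpace ℂ (Fin N)) := by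
  set z : Fin n → ℂ := fun k => Complex.exp (2 * Real.pi * Complex.I * k / n) with hzdef
  have hzinj : Function.Injective z := omega_inj hn
  let e : Fin s.card ≃ s := s.equivFin.symm
  have hdet : (Matrix.vandermonde fun i : Fin s.card => z (e i)).det ≠ 0 := by
    rw [Matrix.det_vandermonde_ne_zero_iff]
    exact hzinj.comp (Subtype.val_injective.comp e.injective)
  have hrows : LinearIndependent ℂ fun i : Fin s.card =>
      (Matrix.vandermonde fun i : Fin s.card => z (e i)) i :=
    Matrix.linearIndependent_rows_iff_isUnit.mpr
      ((Matrix.isUnit_iff_isUnit_det _).mpr hdet.isUnit)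
  let R : EuclideanSpace ℂ (Fin N) →ₗ[ℂ] (Fin s.card → ℂ) :=
    (LinearMap.funLeft ℂ ℂ fun j : Fin s.card => (⟨j.1, lt_of_lt_of_le j.2 hs⟩ : Fin N)) ∘ₗ
      (WithLp.linearEquiv 2 ℂ (Fin N → ℂ)).toLinearMap
  have hcomp : LinearIndependent ℂ
      (R ∘ ((fun k : s => (WithLp.toLp 2 (fun q : Fin N => z k ^ (q : ℕ)) : EuclideanSpace ℂ (Fin N))) ∘ e)) :=
    hrows
  have h1 := LinearIndependent.of_comp R hcomp
  exact (linearIndependent_equiv e).mp h1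

/-- Noiseless superset correctness: with `y = A x₀`, `supp x₀ = T`, `m > 2|T|` and
`|T|+1 ≤ L ≤ m−|T|−1`, the identified set
`Ω = {k : sin∠(a_k^L, Ran Hankel(y)) = 0}` equals `T` exactly;
in particular `|Ω| = |T| ≤ m`, so the final least-squares step is well posed. -/
theorem superset_equals_support (m n L : ℕ) (hmn : m ≤ n)
    (hspark : ∀ f : Fin m → Fin n, Function.Injective f →
      LinearIndependent ℂ (fun i : Fin m => fun j : Fin m => partialFourier m n j (f i)))
    (x₀ : Fin n → ℂ) (T : Finset (Fin n)) (hsupp : ∀ k, x₀ k ≠ 0 ↔ k ∈ T)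
    (hm : 2 * T.card < m) (hL1 : T.card + 1 ≤ L) (hL2 : L ≤ m - T.card - 1)
    (y : Fin m → ℂ) (hy : y = (partialFourier m n).mulVec x₀) :
    {k : Fin n |
        sinAngle (WithLp.toLp 2 (fun p : Fin L => partialFourier m n ⟨p.1, by have := p.2; omega⟩ k) :
          EuclideanSpace ℂ (Fin L)) (colSpan (hankel m L y)) = 0} = ↑T ∧
      T.card ≤ m := by
  have hTm : T.card ≤ m := by omega
  refine ⟨?_, hTm⟩
  have hn : 0 < n := by omega
  have hLm : L ≤ m := by omega
  have hL0 : 0 < L := by omega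
  subst hy
  set z : Fin n → ℂ := fun k => Complex.exp (2 * Real.pi * Complex.I * k / n) with hzdef
  have key : ∀ (j : Fin m) (k : Fin n), partialFourier m n j k = z k ^ (j : ℕ) := by
    intro j k
    show Complex.exp (2 * Real.pi * Complex.I * j * k / n) = _
    rw [hzdef, ← Complex.exp_nat_mul]
    congr 1
    ring
  set a : Fin n → EuclideanSpace ℂ (Fin L) := fun k => WithLp.toLp 2 (fun p => z k ^ (p : ℕ)) with hadef
  set Y := hankel m L ((partialFourier m n).mulVec x₀) with hYdef
  set W : Submodule ℂ (EuclideanSpace ℂ (Fin L)) := Submodule.span ℂ (a '' ↑T) with hWdef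
  have hcol : ∀ q : Fin (m - L),
      (WithLp.toLp 2 (fun p => Y p q) : EuclideanSpace ℂ (Fin L)) =
        ∑ k ∈ T, (x₀ k * z k ^ (q : ℕ)) • a k := by
    intro q
    ext p
    have hpq : p.1 + q.1 < m := by omega
    have happ : (∑ k ∈ T, (x₀ k * z k ^ (q : ℕ)) • a k) p
        = ∑ k ∈ T, (x₀ k * z k ^ (q : ℕ)) * z k ^ (p : ℕ) :=
      by rw [WithLp.ofLp_sum, Finset.sum_apply]; rfl
    have hlhs : Y p q = ∑ j ∈ T, partialFourier m n ⟨p.1 + q.1, hpq⟩ j * x₀ j := by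
      show (partialFourier m n).mulVec x₀ ⟨p.1 + q.1, hpq⟩ = _
      show ∑ j : Fin n, partialFourier m n ⟨p.1 + q.1, hpq⟩ j * x₀ j = _
      refine (Finset.sum_subset T.subset_univ fun x _ hx => ?_).symm
      have hx0 : x₀ x = 0 := by
        by_contra hne
        exact hx ((hsupp x).mp hne)
      rw [hx0, mul_zero]
    show Y p q = _
    rw [happ, hlhs]
    refine Finset.sum_congr rfl fun j hj => ?_
    rw [key]
    show z j ^ (p.1 + q.1) * x₀ j = _
    rw [pow_add]
    ring
  have hKW : colSpan Y ≤ W := by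
    rw [colSpan, Submodule.span_le]
    rintro _ ⟨q, rfl⟩
    simp only [SetLike.mem_coe]
    show (WithLp.toLp 2 (fun p => Y p q) : EuclideanSpace ℂ (Fin L)) ∈ W
    rw [hcol q]
    exact Submodule.sum_mem _ fun k hk =>
      Submodule.smul_mem _ _ (Submodule.subset_span ⟨k, hk, rfl⟩)
  have hWK : W ≤ colSpan Y := by
    rw [hWdef, Submodule.span_le]
    rintro _ ⟨k₀, hk₀, rfl⟩
    simp only [SetLike.mem_coe]
    rw [← Submodule.orthogonal_orthogonal (colSpan Y), Submodule.mem_orthogonal]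
    intro u hu
    have hcols : ∀ q : Fin (m - L),
        (inner ℂ u (WithLp.toLp 2 (fun p => Y p q) : EuclideanSpace ℂ (Fin L)) : ℂ) = 0 := by
      intro q
      exact (Submodule.mem_orthogonal' _ u).mp hu _ (Submodule.subset_span ⟨q, rfl⟩)
    have hrel : ∀ q : Fin (m - L),
        ∑ k ∈ T, (x₀ k * (inner ℂ u (a k) : ℂ)) * z k ^ (q : ℕ) = 0 := by
      intro q
      have h1 := hcols q
      rw [hcol q, inner_sum] at h1
      simp_rw [inner_smul_right] at h1
      rw [← h1]
      exact Finset.sum_congr rfl fun k _ => by ring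
    have hTN : T.card ≤ m - L := by omega
    have hli := vand_li hn (m - L) T hTN
    have hzero : ∑ i : T, (x₀ i.1 * (inner ℂ u (a i.1) : ℂ)) •
        (WithLp.toLp 2 (fun q : Fin (m - L) => z (i : Fin n) ^ (q : ℕ)) : EuclideanSpace ℂ (Fin (m - L))) = 0 := by
      ext q
      have hval : (∑ i : T, (x₀ i.1 * (inner ℂ u (a i.1) : ℂ)) •
          (WithLp.toLp 2 (fun q : Fin (m - L) => z (i : Fin n) ^ (q : ℕ)) : EuclideanSpace ℂ (Fin (m - L)))) q
          = ∑ i : T, (x₀ i.1 * (inner ℂ u (a i.1) : ℂ)) * z (i : Fin n) ^ (q : ℕ) :=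
        by rw [WithLp.ofLp_sum, Finset.sum_apply]; rfl
      rw [hval]
      rw [Finset.sum_coe_sort T (fun k => (x₀ k * (inner ℂ u (a k) : ℂ)) * z k ^ (q : ℕ))]
      exact hrel q
    have hall := Fintype.linearIndependent_iff.mp hli
      (fun k : T => x₀ k.1 * (inner ℂ u (a k.1) : ℂ)) hzero ⟨k₀, hk₀⟩
    exact (mul_eq_zero.mp hall).resolve_left ((hsupp k₀).mpr hk₀)
  have hKeq : colSpan Y = W := le_antisymm hKW hWK
  ext k
  simp only [Set.mem_setOf_eq]
  have hak : (WithLp.toLp 2 (fun p : Fin L => partialFourier m n ⟨p.1, by have := p.2; omega⟩ k) :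
      EuclideanSpace ℂ (Fin L)) = a k := by
    ext p
    exact key ⟨p.1, by omega⟩ k
  rw [hak, hKeq]
  have hane : a k ≠ 0 := by
    intro h
    have h0 : a k ⟨0, hL0⟩ = 0 := by rw [h]; rfl
    rw [hadef] at h0
    simp at h0
  have hsin : sinAngle (a k) W = 0 ↔ a k ∈ W := by
    rw [sinAngle, div_eq_zero_iff, norm_eq_zero, norm_eq_zero, sub_eq_zero]
    constructor
    · rintro (h | h)
      · exact Submodule.starProjection_eq_self_iff.mp h.symm
      · exact absurd h hane
    · intro h
      exact Or.inl (Submodule.starProjection_eq_self_iff.mpr h).symm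
  rw [hsin]
  constructor
  · intro h
    by_contra hk
    have hcard : (insert k T).card ≤ L := by
      rw [Finset.card_insert_of_notMem hk]; omega
    have hli := vand_li hn L (insert k T) hcard
    have hnot := hli.notMem_span_image (R := ℂ)
      (s := {j : (insert k T : Finset (Fin n)) | (j : Fin n) ∈ T})
      (x := ⟨k, Finset.mem_insert_self k T⟩) (by simpa using hk)
    apply hnot
    have himg : (fun j : (insert k T : Finset (Fin n)) =>
          (WithLp.toLp 2 (fun q : Fin L => z (j : Fin n) ^ (q : ℕ)) : EuclideanSpace ℂ (Fin L))) ''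
          {j | (j : Fin n) ∈ T} = a '' ↑T := by
      ext v
      constructor
      · rintro ⟨j, hj, rfl⟩
        exact ⟨j, hj, rfl⟩
      · rintro ⟨j, hj, rfl⟩
        exact ⟨⟨j, Finset.mem_insert_of_mem hj⟩, hj, rfl⟩
    rw [himg]
    exact h
  · intro hk
    exact Submodule.subset_span ⟨k, hk, rfl⟩
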